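/- The generating functions G_{m,N}(a,b,q) for Capparelli-type partitions satisfy the recurrence G_{m,3N} = G_{m,3(N-1)+2} + q^{3N} G_{m,3(N-1)} for all positive integers N and m ∈ {1,2}. -/

import Mathlib

namespace CapparelliG

/-- `G m Nb` is the Alladi–Andrews–Gordon three-variable generating function
`G_{m,Nb}(a,b,q)` (with `a = X 0`, `b = X 1`, `q = X 2`): the coefficient of
`aⁱ bʲ qⁿ` is the number of partitions of `n` (recorded as weakly decreasing lists of
positive integers, here necessarily strictly decreasing) with no part equal to `m`,
largest part `≤ Nb`, consecutive-part differences `≥ 4` unless the parts are consecutive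
multiples of 3 (difference 3) or sum to a multiple of 6 (difference at least 2), with
exactly `i` parts `≡ 2 (mod 3)` and exactly `j` parts `≡ 1 (mod 3)`. -/
noncomputable def G (m : ℕ) (Nb : ℕ) : MvPowerSeries (Fin 3) ℤ :=
  fun d =>
    (Nat.card {l : List ℕ // (∀ x ∈ l, 0 < x ∧ x ≠ m ∧ x ≤ Nb) ∧
        l.Chain' (fun x y => y + 2 ≤ x ∧
          (y + 4 ≤ x ∨ (3 ∣ y ∧ x = y + 3) ∨ 6 ∣ (x + y))) ∧
        (l.filter (fun x => x % 3 = 2)).length = d 0 ∧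
        (l.filter (fun x => x % 3 = 1)).length = d 1 ∧
        l.sum = d 2} : ℤ)

def Cond (m Nb i j n : ℕ) (l : List ℕ) : Prop :=
  (∀ x ∈ l, 0 < x ∧ x ≠ m ∧ x ≤ Nb) ∧
  l.Chain' (fun x y => y + 2 ≤ x ∧
    (y + 4 ≤ x ∨ (3 ∣ y ∧ x = y + 3) ∨ 6 ∣ (x + y))) ∧
  (l.filter (fun x => x % 3 = 2)).length = i ∧
  (l.filter (fun x => x % 3 = 1)).length = j ∧
  l.sum = n

lemma coeff_G (m Nb : ℕ) (d : Fin 3 →₀ ℕ) :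
    MvPowerSeries.coeff d (G m Nb) =
      (Nat.card {l : List ℕ // Cond m Nb (d 0) (d 1) (d 2) l} : ℤ) := rfl

lemma pairwise_of_chain {l : List ℕ}
    (h : l.Chain' (fun x y => y + 2 ≤ x ∧
      (y + 4 ≤ x ∨ (3 ∣ y ∧ x = y + 3) ∨ 6 ∣ (x + y)))) :
    l.Pairwise (· > ·) := by
  haveI : IsTrans ℕ (· > ·) := ⟨fun a b c h1 h2 => lt_trans h2 h1⟩
  rw [← List.isChain_iff_pairwise]
  exact h.imp fun a b hab => by omega

lemma head_bound {a : ℕ} {t : List ℕ}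
    (h : (a :: t).Chain' (fun x y => y + 2 ≤ x ∧
      (y + 4 ≤ x ∨ (3 ∣ y ∧ x = y + 3) ∨ 6 ∣ (x + y)))) :
    ∀ x ∈ t, x < a :=
  fun x hx => (List.pairwise_cons.1 (pairwise_of_chain h)).1 x hx

instance finiteCond (m Nb i j n : ℕ) : Finite {l : List ℕ // Cond m Nb i j n l} := by
  apply Finite.of_injective (β := Fin (Nb + 1) → Bool)
    (fun x => fun k => decide (k.val ∈ x.1))
  intro x y hxy
  have hmem : ∀ a : ℕ, a ∈ x.1 ↔ a ∈ y.1 := by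
    intro a
    by_cases ha : a ≤ Nb
    · simpa using congrFun hxy ⟨a, by omega⟩
    · constructor <;> intro h
      · exact absurd (x.2.1 a h).2.2 (by omega)
      · exact absurd (y.2.1 a h).2.2 (by omega)
  have px := pairwise_of_chain x.2.2.1
  have py := pairwise_of_chain y.2.2.1
  have ndx : x.1.Nodup := px.imp fun h => Nat.ne_of_gt h
  have ndy : y.1.Nodup := py.imp fun h => Nat.ne_of_gt h
  haveI : IsAntisymm ℕ (· > ·) := ⟨fun a b h1 h2 => by omega⟩
  exact Subtype.ext
    (List.Perm.eq_of_pairwise' px py ((List.perm_ext_iff_of_nodup ndx ndy).2 hmem))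

lemma eq_cons_of_head? {l : List ℕ} {a : ℕ} (h : l.head? = some a) : l = a :: l.tail := by
  cases l <;> simp_all

section Keys
variable {m K i j n : ℕ} {l t : List ℕ}

lemma key1 (h : Cond m (3*K+3) i j n l) (hh : l.head? ≠ some (3*K+3)) :
    Cond m (3*K+2) i j n l := by
  obtain ⟨hb, hc, h2, h1, hs⟩ := h
  refine ⟨?_, hc, h2, h1, hs⟩
  cases l with
  | nil => simp
  | cons a t =>
    have ha : a ≠ 3*K+3 := by intro e; exact hh (by simp [e])
    have hat := head_bound hc
    intro x hx
    rcases List.mem_cons.1 hx with rfl | hx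
    · have hb' := hb x (List.mem_cons_self)
      exact ⟨hb'.1, hb'.2.1, by omega⟩
    · have hb' := hb x (List.mem_cons_of_mem _ hx)
      have hxa := hat x hx
      have haB := (hb a (List.mem_cons_self)).2.2
      exact ⟨hb'.1, hb'.2.1, by omega⟩

lemma key2 (h : Cond m (3*K+2) i j n l) :
    Cond m (3*K+3) i j n l ∧ l.head? ≠ some (3*K+3) := by
  obtain ⟨hb, hc, h2, h1, hs⟩ := h
  refine ⟨⟨fun x hx => ⟨(hb x hx).1, (hb x hx).2.1, by have := (hb x hx).2.2; omega⟩,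
    hc, h2, h1, hs⟩, ?_⟩
  cases l with
  | nil => simp
  | cons a t =>
    have := (hb a (List.mem_cons_self)).2.2
    simp only [List.head?_cons, Ne, Option.some.injEq]
    omega

lemma key3 (hm : m ≤ 2) (h : Cond m (3*K) i j n t) :
    Cond m (3*K+3) i j (n + (3*K+3)) ((3*K+3) :: t) := by
  obtain ⟨hb, hc, h2, h1, hs⟩ := h
  refine ⟨?_, ?_, ?_, ?_, ?_⟩
  · intro x hx
    rcases List.mem_cons.1 hx with rfl | hx
    · exact ⟨by omega, by omega, le_refl _⟩
    · have := hb x hx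
      exact ⟨this.1, this.2.1, by omega⟩
  · show List.IsChain _ _; rw [List.isChain_cons]
    refine ⟨?_, hc⟩
    intro y hy
    have hyt : y ∈ t := List.mem_of_mem_head? hy
    have hyb := (hb y hyt).2.2
    refine ⟨by omega, ?_⟩
    by_cases h3 : y = 3*K
    · subst h3; exact Or.inr (Or.inl ⟨⟨K, rfl⟩, rfl⟩)
    · exact Or.inl (by omega)
  · rw [List.filter_cons_of_neg (by simp)]; exact h2
  · rw [List.filter_cons_of_neg (by simp)]; exact h1
  · rw [List.sum_cons, hs]; omega

lemma key4 (h : Cond m (3*K+3) i j n ((3*K+3) :: t)) :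
    Cond m (3*K) i j (n - (3*K+3)) t ∧ 3*K+3 ≤ n := by
  obtain ⟨hb, hc, h2, h1, hs⟩ := h
  have hsum : 3*K+3 + t.sum = n := by simpa using hs
  have hts : ∀ x ∈ t, x ≤ 3*K := by
    cases t with
    | nil => simp
    | cons y t' =>
      have hcy := (List.isChain_cons.1 hc).1 y rfl
      have hy : y ≤ 3*K := by rcases hcy.2 with h | h | h <;> omega
      intro x hx
      rcases List.mem_cons.1 hx with rfl | hx
      · exact hy
      · have := head_bound (List.IsChain.tail hc) x hx
        omega
  refine ⟨⟨fun x hx => ⟨(hb x (List.mem_cons_of_mem _ hx)).1,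
      (hb x (List.mem_cons_of_mem _ hx)).2.1, hts x hx⟩,
    hc.tail, ?_, ?_, by omega⟩, by omega⟩
  · rw [List.filter_cons_of_neg (by simp)] at h2; exact h2
  · rw [List.filter_cons_of_neg (by simp)] at h1; exact h1

end Keys

/-- Berkovich–Uncu, recurrence (AAGrec2): for `m ∈ {1,2}` and every positive integer `N`,
`G_{m,3N} = G_{m,3(N-1)+2} + q^{3N} G_{m,3(N-1)}`. -/
theorem G_recurrence (m : ℕ) (hm : m = 1 ∨ m = 2) (N : ℕ) (hN : 1 ≤ N) :
    G m (3 * N) =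
      G m (3 * (N - 1) + 2) + (MvPowerSeries.X 2 : MvPowerSeries (Fin 3) ℤ) ^ (3 * N) *
        G m (3 * (N - 1)) := by
  obtain ⟨K, rfl⟩ : ∃ K, N = K + 1 := ⟨N - 1, by omega⟩
  have hm2 : m ≤ 2 := by omega
  have e3 : 3 * (K + 1) = 3*K+3 := by ring
  have e2 : 3 * (K + 1 - 1) + 2 = 3*K+2 := by omega
  have e0 : 3 * (K + 1 - 1) = 3*K := by omega
  rw [e3, e2, e0]
  apply MvPowerSeries.ext
  intro d
  rw [map_add, MvPowerSeries.X_pow_eq, MvPowerSeries.coeff_monomial_mul,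
    coeff_G, coeff_G, coeff_G]
  have hd0 : (d - Finsupp.single 2 (3*K+3) : Fin 3 →₀ ℕ) 0 = d 0 := by
    rw [Finsupp.tsub_apply, Finsupp.single_eq_of_ne (by decide), Nat.sub_zero]
  have hd1 : (d - Finsupp.single 2 (3*K+3) : Fin 3 →₀ ℕ) 1 = d 1 := by
    rw [Finsupp.tsub_apply, Finsupp.single_eq_of_ne (by decide), Nat.sub_zero]
  have hd2 : (d - Finsupp.single 2 (3*K+3) : Fin 3 →₀ ℕ) 2 = d 2 - (3*K+3) := by
    rw [Finsupp.tsub_apply, Finsupp.single_eq_same]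
  by_cases hle : 3*K+3 ≤ d 2
  · rw [if_pos (Finsupp.single_le_iff.2 hle), one_mul, hd0, hd1, hd2]
    have hcard : Nat.card {l : List ℕ // Cond m (3*K+3) (d 0) (d 1) (d 2) l} =
        Nat.card {l : List ℕ // Cond m (3*K+2) (d 0) (d 1) (d 2) l} +
        Nat.card {l : List ℕ // Cond m (3*K) (d 0) (d 1) (d 2 - (3*K+3)) l} := by
      classical
      rw [← Nat.card_sum]
      apply Nat.card_congr
      refine ((Equiv.sumCompl
        (fun x : {l : List ℕ // Cond m (3*K+3) (d 0) (d 1) (d 2) l} =>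
          x.1.head? = some (3*K+3))).symm.trans (Equiv.sumComm _ _)).trans
        (Equiv.sumCongr ?_ ?_)
      · exact
          { toFun := fun x => ⟨x.1.1, key1 x.1.2 x.2⟩
            invFun := fun y => ⟨⟨y.1, (key2 y.2).1⟩, (key2 y.2).2⟩
            left_inv := fun _ => rfl
            right_inv := fun _ => rfl }
      · exact
          { toFun := fun x => ⟨x.1.1.tail, (key4 (eq_cons_of_head? x.2 ▸ x.1.2)).1⟩
            invFun := fun y => ⟨⟨(3*K+3) :: y.1, by
              have := key3 hm2 y.2
              rwa [Nat.sub_add_cancel hle] at this⟩, rfl⟩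
            left_inv := fun x => Subtype.ext (Subtype.ext (eq_cons_of_head? x.2).symm)
            right_inv := fun _ => rfl }
    exact_mod_cast hcard
  · rw [if_neg (fun hcon => hle (Finsupp.single_le_iff.1 hcon)), add_zero]
    have hcard : Nat.card {l : List ℕ // Cond m (3*K+3) (d 0) (d 1) (d 2) l} =
        Nat.card {l : List ℕ // Cond m (3*K+2) (d 0) (d 1) (d 2) l} := by
      apply Nat.card_congr
      apply Equiv.subtypeEquivRight
      intro l
      constructor
      · intro h
        apply key1 h
        intro hh
        have hl := eq_cons_of_head? hh
        have : l.sum = d 2 := h.2.2.2.2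
        rw [hl, List.sum_cons] at this
        omega
      · exact fun h => (key2 h).1
    exact_mod_cast hcard

end CapparelliG
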